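/- Let k ≥ 1 and n ≥ 1, let p₁, …, p_k ≥ 0 with Σ_{j=1}^k p_j = 1, and let X₁, …, X_n be i.i.d. random variables with values in {1, …, k} such that P(X_i = j) = p_j for each j. For j = 1, …, k set N_j = #{ 1 ≤ i ≤ n : X_i = j }, so that (N₁, …, N_k) is Multinomial(n; p₁, …, p_k). Then for every nonnegative nondecreasing function f : ℕ → ℝ, E[ Π_{j=1}^k f(N_j) ] ≤ Π_{j=1}^k E[ f(N_j) ]. -/

import Mathlib

open MeasureTheory ProbabilityTheory Finset

namespace Stmt5Aux

def cnt {n k : ℕ} (x : Fin n → Fin k) (j : Fin k) : ℕ :=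
  (Finset.univ.filter fun i => x i = j).card

lemma cnt_cons {k n : ℕ} (c : Fin k) (y : Fin n → Fin k) (j : Fin k) :
    cnt (Fin.cons c y) j = (if c = j then 1 else 0) + cnt y j := by
  simp only [cnt, Finset.card_filter]
  rw [Fin.sum_univ_succ]
  simp

lemma wsum {k : ℕ} (p : Fin k → ℝ) (hpsum : ∑ j, p j = 1) (n : ℕ) :
    ∑ x : Fin n → Fin k, ∏ i, p (x i) = 1 := by
  have h := Finset.prod_univ_sum (fun _ : Fin n => (Finset.univ : Finset (Fin k)))
    (fun _ j => p j)
  rw [Fintype.piFinset_univ] at h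
  rw [← h]
  simp [hpsum]

lemma cheb {k : ℕ} (p : Fin k → ℝ) (hp : ∀ j, 0 ≤ p j) (hpsum : ∑ j, p j = 1)
    (A B : Finset (Fin k)) (hAB : Disjoint A B) (φ ψ : Fin k → ℝ) (φ₀ ψ₀ : ℝ)
    (hφ : ∀ c ∉ A, φ c = φ₀) (hψ : ∀ c ∉ B, ψ c = ψ₀)
    (hφ' : ∀ c, φ₀ ≤ φ c) (hψ' : ∀ c, ψ₀ ≤ ψ c) :
    ∑ c, p c * (φ c * ψ c) ≤ (∑ c, p c * φ c) * (∑ c, p c * ψ c) := by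
  have hzero : ∀ c, (φ c - φ₀) * (ψ c - ψ₀) = 0 := by
    intro c
    by_cases hc : c ∈ A
    · have : c ∉ B := Finset.disjoint_left.mp hAB hc
      rw [hψ c this]; ring
    · rw [hφ c hc]; ring
  set a := ∑ c, p c * (φ c - φ₀) with ha
  set b := ∑ c, p c * (ψ c - ψ₀) with hb
  have ha0 : 0 ≤ a := Finset.sum_nonneg fun c _ =>
    mul_nonneg (hp c) (sub_nonneg.mpr (hφ' c))
  have hb0 : 0 ≤ b := Finset.sum_nonneg fun c _ =>
    mul_nonneg (hp c) (sub_nonneg.mpr (hψ' c))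
  have hL : ∑ c, p c * (φ c * ψ c) = φ₀ * ψ₀ + φ₀ * b + ψ₀ * a := by
    have : ∀ c, p c * (φ c * ψ c)
        = p c * (φ₀ * ψ₀) + φ₀ * (p c * (ψ c - ψ₀)) + ψ₀ * (p c * (φ c - φ₀))
          + p c * ((φ c - φ₀) * (ψ c - ψ₀)) := by intro c; ring
    simp only [this, Finset.sum_add_distrib, hzero, mul_zero, Finset.sum_const_zero,
      ← Finset.mul_sum, ← Finset.sum_mul, hpsum]
    ring
  have hΦ : ∑ c, p c * φ c = φ₀ + a := by
    have : ∀ c, p c * φ c = p c * φ₀ + p c * (φ c - φ₀) := by intro c; ring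
    simp only [this, Finset.sum_add_distrib, ← Finset.sum_mul, hpsum]
    ring
  have hΨ : ∑ c, p c * ψ c = ψ₀ + b := by
    have : ∀ c, p c * ψ c = p c * ψ₀ + p c * (ψ c - ψ₀) := by intro c; ring
    simp only [this, Finset.sum_add_distrib, ← Finset.sum_mul, hpsum]
    ring
  rw [hL, hΦ, hΨ]
  nlinarith [mul_nonneg ha0 hb0]

lemma sum_cons {k n : ℕ} (g : (Fin (n+1) → Fin k) → ℝ) :
    ∑ x : Fin (n+1) → Fin k, g x = ∑ c : Fin k, ∑ y : Fin n → Fin k, g (Fin.cons c y) := by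
  rw [← (Fin.consEquiv (fun _ : Fin (n+1) => Fin k)).sum_comp g]
  rw [Fintype.sum_prod_type]
  rfl

lemma na {k : ℕ} (p : Fin k → ℝ) (hp : ∀ j, 0 ≤ p j) (hpsum : ∑ j, p j = 1) :
    ∀ (n : ℕ) (A B : Finset (Fin k)), Disjoint A B →
    ∀ (F G : (Fin k → ℕ) → ℝ),
      (∀ v w, (∀ j ∈ A, v j = w j) → F v = F w) →
      (∀ v w, (∀ j ∈ B, v j = w j) → G v = G w) →
      Monotone F → Monotone G →
    ∑ x : Fin n → Fin k, (∏ i, p (x i)) * (F (cnt x) * G (cnt x))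
      ≤ (∑ x : Fin n → Fin k, (∏ i, p (x i)) * F (cnt x)) *
        (∑ x : Fin n → Fin k, (∏ i, p (x i)) * G (cnt x)) := by
  intro n
  induction n with
  | zero =>
    intro A B _ F G _ _ _ _
    have hu : ∀ g : (Fin 0 → Fin k) → ℝ, ∑ x : Fin 0 → Fin k, g x = g (fun i => i.elim0) := by
      intro g
      rw [Fintype.sum_eq_single (fun i => i.elim0)]
      · intro x hx; exact absurd (funext fun i => i.elim0) hx
    rw [hu, hu, hu]
    simp
  | succ n ih =>
    intro A B hAB F G hFA hGB hFm hGm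
    have hw : ∀ (c : Fin k) (y : Fin n → Fin k),
        ∏ i : Fin (n+1), p ((Fin.cons c y : Fin (n+1) → Fin k) i) = p c * ∏ i, p (y i) := by
      intro c y
      simp [Fin.prod_univ_succ]
    have hcnt : ∀ (c : Fin k) (y : Fin n → Fin k),
        cnt (Fin.cons c y) = fun j => (if c = j then 1 else 0) + cnt y j :=
      fun c y => funext fun j => cnt_cons c y j
    set w : (Fin n → Fin k) → ℝ := fun y => ∏ i, p (y i) with hwdef
    have hw0 : ∀ y, 0 ≤ w y := fun y => Finset.prod_nonneg fun i _ => hp _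
    set Fc : Fin k → (Fin k → ℕ) → ℝ :=
      fun c v => F (fun j => (if c = j then 1 else 0) + v j) with hFc
    set Gc : Fin k → (Fin k → ℕ) → ℝ :=
      fun c v => G (fun j => (if c = j then 1 else 0) + v j) with hGc
    set φ : Fin k → ℝ := fun c => ∑ y : Fin n → Fin k, w y * Fc c (cnt y) with hφdef
    set ψ : Fin k → ℝ := fun c => ∑ y : Fin n → Fin k, w y * Gc c (cnt y) with hψdef
    set φ₀ : ℝ := ∑ y : Fin n → Fin k, w y * F (cnt y) with hφ₀def
    set ψ₀ : ℝ := ∑ y : Fin n → Fin k, w y * G (cnt y) with hψ₀def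
    rw [sum_cons, sum_cons, sum_cons]
    have hLrw : ∀ c : Fin k, (∑ y : Fin n → Fin k,
        (∏ i : Fin (n+1), p ((Fin.cons c y : Fin (n+1) → Fin k) i)) *
          (F (cnt (Fin.cons c y)) * G (cnt (Fin.cons c y))))
        = p c * ∑ y : Fin n → Fin k, w y * (Fc c (cnt y) * Gc c (cnt y)) := by
      intro c
      rw [Finset.mul_sum]
      refine Finset.sum_congr rfl fun y _ => ?_
      rw [hw, hcnt]
      ring
    have hFrw : ∀ c : Fin k, (∑ y : Fin n → Fin k,
        (∏ i : Fin (n+1), p ((Fin.cons c y : Fin (n+1) → Fin k) i)) *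
          F (cnt (Fin.cons c y))) = p c * φ c := by
      intro c
      rw [hφdef, Finset.mul_sum]
      refine Finset.sum_congr rfl fun y _ => ?_
      rw [hw, hcnt]; ring
    have hGrw : ∀ c : Fin k, (∑ y : Fin n → Fin k,
        (∏ i : Fin (n+1), p ((Fin.cons c y : Fin (n+1) → Fin k) i)) *
          G (cnt (Fin.cons c y))) = p c * ψ c := by
      intro c
      rw [hψdef, Finset.mul_sum]
      refine Finset.sum_congr rfl fun y _ => ?_
      rw [hw, hcnt]; ring
    simp only [hLrw, hFrw, hGrw]
    have hinner : ∀ c : Fin k,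
        ∑ y : Fin n → Fin k, w y * (Fc c (cnt y) * Gc c (cnt y)) ≤ φ c * ψ c := by
      intro c
      refine ih A B hAB (Fc c) (Gc c) ?_ ?_ ?_ ?_
      · intro v v' h
        exact hFA _ _ fun j hj => by rw [h j hj]
      · intro v v' h
        exact hGB _ _ fun j hj => by rw [h j hj]
      · intro v v' h
        exact hFm fun j => Nat.add_le_add_left (h j) _
      · intro v v' h
        exact hGm fun j => Nat.add_le_add_left (h j) _
    calc ∑ c : Fin k, p c * ∑ y : Fin n → Fin k, w y * (Fc c (cnt y) * Gc c (cnt y))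
        ≤ ∑ c : Fin k, p c * (φ c * ψ c) :=
          Finset.sum_le_sum fun c _ => mul_le_mul_of_nonneg_left (hinner c) (hp c)
      _ ≤ (∑ c, p c * φ c) * (∑ c, p c * ψ c) := by
          refine cheb p hp hpsum A B hAB φ ψ φ₀ ψ₀ ?_ ?_ ?_ ?_
          · intro c hc
            refine Finset.sum_congr rfl fun y _ => ?_
            congr 1
            refine hFA _ _ fun j hj => ?_
            have : c ≠ j := fun h => hc (h ▸ hj)
            simp [this]
          · intro c hc
            refine Finset.sum_congr rfl fun y _ => ?_
            congr 1
            refine hGB _ _ fun j hj => ?_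
            have : c ≠ j := fun h => hc (h ▸ hj)
            simp [this]
          · intro c
            refine Finset.sum_le_sum fun y _ => mul_le_mul_of_nonneg_left ?_ (hw0 y)
            exact hFm fun j => Nat.le_add_left _ _
          · intro c
            refine Finset.sum_le_sum fun y _ => mul_le_mul_of_nonneg_left ?_ (hw0 y)
            exact hGm fun j => Nat.le_add_left _ _

lemma step {k n : ℕ} (p : Fin k → ℝ) (hp : ∀ j, 0 ≤ p j) (hpsum : ∑ j, p j = 1)
    (f : ℕ → ℝ) (hf0 : ∀ m, 0 ≤ f m) (hfmono : Monotone f) (S : Finset (Fin k)) :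
    ∑ x : Fin n → Fin k, (∏ i, p (x i)) * ∏ j ∈ S, f (cnt x j)
      ≤ ∏ j ∈ S, ∑ x : Fin n → Fin k, (∏ i, p (x i)) * f (cnt x j) := by
  induction S using Finset.induction_on with
  | empty => simp [wsum p hpsum n]
  | @insert a S ha ih =>
    have hw0 : ∀ x : Fin n → Fin k, (0:ℝ) ≤ ∏ i, p (x i) :=
      fun x => Finset.prod_nonneg fun i _ => hp _
    have hna := na p hp hpsum n {a} S (Finset.disjoint_singleton_left.mpr ha)
      (fun v => f (v a)) (fun v => ∏ j ∈ S, f (v j))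
      (fun v w h => by rw [h a (Finset.mem_singleton_self a)])
      (fun v w h => by exact Finset.prod_congr rfl fun j hj => by rw [h j hj])
      (fun v w h => hfmono (h a))
      (fun v w h => Finset.prod_le_prod (fun j _ => hf0 _) (fun j _ => hfmono (h j)))
    have h1 : (0:ℝ) ≤ ∑ x : Fin n → Fin k, (∏ i, p (x i)) * f (cnt x a) :=
      Finset.sum_nonneg fun x _ => mul_nonneg (hw0 x) (hf0 _)
    calc ∑ x : Fin n → Fin k, (∏ i, p (x i)) * ∏ j ∈ insert a S, f (cnt x j)
        = ∑ x : Fin n → Fin k, (∏ i, p (x i)) * (f (cnt x a) * ∏ j ∈ S, f (cnt x j)) := by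
          refine Finset.sum_congr rfl fun x _ => ?_
          rw [Finset.prod_insert ha]
      _ ≤ (∑ x : Fin n → Fin k, (∏ i, p (x i)) * f (cnt x a)) *
            (∑ x : Fin n → Fin k, (∏ i, p (x i)) * ∏ j ∈ S, f (cnt x j)) := hna
      _ ≤ (∑ x : Fin n → Fin k, (∏ i, p (x i)) * f (cnt x a)) *
            ∏ j ∈ S, ∑ x : Fin n → Fin k, (∏ i, p (x i)) * f (cnt x j) :=
          mul_le_mul_of_nonneg_left ih h1
      _ = ∏ j ∈ insert a S, ∑ x : Fin n → Fin k, (∏ i, p (x i)) * f (cnt x j) :=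
          by rw [Finset.prod_insert ha]

end Stmt5Aux

open Stmt5Aux

/-- If `X₁, …, X_n` are i.i.d. with values in `{1, …, k}` (here `Fin k`) and
`P(Xᵢ = j) = p_j`, and `N_j = #{i : Xᵢ = j}` are the multinomial counts, then for every
nonnegative nondecreasing `f : ℕ → ℝ`, `E[∏_j f(N_j)] ≤ ∏_j E[f(N_j)]`. -/
theorem stmt_5
    {Ω : Type*} [MeasurableSpace Ω] (P : Measure Ω) [IsProbabilityMeasure P]
    (k n : ℕ) (hk : 1 ≤ k) (hn : 1 ≤ n)
    (p : Fin k → ℝ) (hp : ∀ j, 0 ≤ p j) (hpsum : ∑ j, p j = 1)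
    (X : Fin n → Ω → Fin k) (hXmeas : ∀ i, Measurable (X i))
    (hindep : iIndepFun X P)
    (hlaw : ∀ i j, P {ω | X i ω = j} = ENNReal.ofReal (p j))
    (f : ℕ → ℝ) (hf0 : ∀ m, 0 ≤ f m) (hfmono : Monotone f) :
    ∫ ω, ∏ j : Fin k, f ((Finset.univ.filter fun i => X i ω = j).card) ∂P
      ≤ ∏ j : Fin k, ∫ ω, f ((Finset.univ.filter fun i => X i ω = j).card) ∂P := by
  classical
  set T : Ω → (Fin n → Fin k) := fun ω i => X i ω with hT
  have hTmeas : Measurable T := measurable_pi_lambda _ hXmeas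
  set ν : Measure (Fin n → Fin k) := Measure.map T P with hν
  have hνp : IsProbabilityMeasure ν := Measure.isProbabilityMeasure_map hTmeas.aemeasurable
  have hνsingle : ∀ x : Fin n → Fin k, (ν {x}).toReal = ∏ i, p (x i) := by
    intro x
    have hpre : T ⁻¹' {x} = ⋂ i ∈ (Finset.univ : Finset (Fin n)), X i ⁻¹' {x i} := by
      ext ω
      simp [hT, funext_iff]
    have hmap : ν {x} = P (T ⁻¹' {x}) :=
      Measure.map_apply hTmeas (MeasurableSet.singleton x)
    have hind := hindep.measure_inter_preimage_eq_mul (Finset.univ : Finset (Fin n))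
      (sets := fun i => ({x i} : Set (Fin k))) (fun i _ => MeasurableSet.singleton _)
    have hXi : ∀ i : Fin n, P (X i ⁻¹' {x i}) = ENNReal.ofReal (p (x i)) := by
      intro i
      have : X i ⁻¹' {x i} = {ω | X i ω = x i} := by ext ω; simp
      rw [this, hlaw]
    rw [hmap, hpre, hind]
    simp only [hXi]
    rw [ENNReal.toReal_prod]
    exact Finset.prod_congr rfl fun i _ => ENNReal.toReal_ofReal (hp _)
  have key : ∀ h : (Fin n → Fin k) → ℝ,
      ∫ ω, h (T ω) ∂P = ∑ x : Fin n → Fin k, (∏ i, p (x i)) * h x := by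
    intro h
    rw [← integral_map hTmeas.aemeasurable (measurable_of_countable h).aestronglyMeasurable]
    rw [integral_fintype (Integrable.of_finite)]
    exact Finset.sum_congr rfl fun x _ => by rw [← hνsingle]; rfl
  have hL : ∫ ω, ∏ j : Fin k, f ((Finset.univ.filter fun i => X i ω = j).card) ∂P
      = ∑ x : Fin n → Fin k, (∏ i, p (x i)) * ∏ j : Fin k, f (cnt x j) :=
    key (fun x => ∏ j : Fin k, f (cnt x j))
  have hR : ∀ j : Fin k, ∫ ω, f ((Finset.univ.filter fun i => X i ω = j).card) ∂P
      = ∑ x : Fin n → Fin k, (∏ i, p (x i)) * f (cnt x j) :=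
    fun j => key (fun x => f (cnt x j))
  rw [hL]
  calc ∑ x : Fin n → Fin k, (∏ i, p (x i)) * ∏ j : Fin k, f (cnt x j)
      ≤ ∏ j : Fin k, ∑ x : Fin n → Fin k, (∏ i, p (x i)) * f (cnt x j) :=
        step p hp hpsum f hf0 hfmono Finset.univ
    _ = ∏ j : Fin k, ∫ ω, f ((Finset.univ.filter fun i => X i ω = j).card) ∂P :=
        Finset.prod_congr rfl fun j _ => (hR j).symm
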